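/- arXiv:0903.4754 — 2 statements merged into one kernel-verified Lean document; each statement's English description precedes it below -/
import Mathlib

section
/- Let n ≥ 2 and let f : EuclideanSpace ℝ (Fin (n+1)) → ℝ be continuous. Suppose that for every pair of orthonormal vectors u, v in EuclideanSpace ℝ (Fin (n+1)) one has ∫_{0}^{2π} f((cos t) • u + (sin t) • v) dt = 0 (i.e. the Funk transform of f vanishes on all great circles of the unit sphere). Then f is odd on the unit sphere: f(-x) = -f(x) for every x with ‖x‖ = 1. -/
set_option maxHeartbeats 1000000
set_option synthInstance.maxHeartbeats 1000000

open Real intervalIntegral MeasureTheory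
open scoped RealInnerProductSpace

namespace FunkAux


noncomputable def SI (k : ℕ) : ℝ := ∫ x in (0:ℝ)..(π/2), sin x ^ k

lemma SI_zero : SI 0 = π / 2 := by simp [SI]
lemma SI_one : SI 1 = 1 := by simp [SI]

lemma SI_rec (k : ℕ) : SI (k+2) = (k+1)/(k+2) * SI k := by
  have := integral_sin_pow (a := 0) (b := π/2) k
  simp [SI, this, Real.cos_pi_div_two]

lemma SI_mul (k : ℕ) : SI k * SI (k+1) = π / (2 * (k+1)) := by
  induction k with
  | zero => simp [SI_zero, SI_one]
  | succ m ih =>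
    have h := SI_rec m
    have hpos : (m:ℝ) + 2 ≠ 0 := by positivity
    rw [show m + 1 + 1 = m + 2 from rfl, h]
    have : SI (m+1) * ((m+1)/(m+2) * SI m) = (m+1)/(m+2) * (SI m * SI (m+1)) := by ring
    rw [this, ih]
    push_cast
    field_simp
    ring

noncomputable def CI (k : ℕ) : ℝ := ∫ t in (0:ℝ)..(2*π), cos t ^ k

lemma CI_odd (k : ℕ) (hk : Odd k) : CI k = 0 := by
  have hper : Function.Periodic (fun t => cos t ^ k) (2*π) := fun t => by
    simp [Real.cos_add_two_pi]
  have h1 : (∫ t in (0:ℝ)..(2*π), cos (t + π) ^ k) = ∫ t in (0+π:ℝ)..(2*π+π), cos t ^ k := by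
    simpa using intervalIntegral.integral_comp_add_right (a := 0) (b := 2*π)
      (fun t => cos t ^ k) π
  have h2 : (∫ t in (0+π:ℝ)..(2*π+π), cos t ^ k) = CI k := by
    have := hper.intervalIntegral_add_eq (t := π) (s := 0)
    simpa [CI, add_comm] using this
  have h3 : (∫ t in (0:ℝ)..(2*π), cos (t + π) ^ k) = - CI k := by
    have : ∀ t : ℝ, cos (t + π) ^ k = - (cos t ^ k) := by
      intro t; rw [Real.cos_add_pi, hk.neg_pow]
    rw [intervalIntegral.integral_congr (fun t _ => this t), intervalIntegral.integral_neg]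
    rfl
  have := h3.symm.trans (h1.trans h2)
  linarith

lemma CI_rec (k : ℕ) : CI (k+2) = (k+1)/(k+2) * CI k := by
  have := integral_cos_pow (a := 0) (b := 2*π) k
  simp [CI, this, Real.sin_two_pi]

lemma CI_even : ∀ m : ℕ, CI (2*m) = 4 * SI (2*m)
  | 0 => by simp [CI, SI]; ring
  | (m+1) => by
    have h1 : 2*(m+1) = 2*m + 2 := by ring
    rw [h1, CI_rec, SI_rec, CI_even m]; ring

noncomputable def Wtr (G : ℝ → ℝ) (s : ℝ) : ℝ := ∫ t in (0:ℝ)..(2*π), G (s * cos t)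
noncomputable def Ltr (G : ℝ → ℝ) : ℝ := ∫ φ in (0:ℝ)..(π/2), Wtr G (sin φ) * sin φ

lemma Wtr_cont {G : ℝ → ℝ} (hG : Continuous G) : Continuous (Wtr G) := by
  apply intervalIntegral.continuous_parametric_intervalIntegral_of_continuous'
    (f := fun s t => G (s * cos t)) (μ := volume)
  exact hG.comp (by fun_prop)

lemma Wtr_monomial (c : ℝ) (k : ℕ) (s : ℝ) :
    Wtr (fun u => c * u ^ k) s = c * s ^ k * CI k := by
  unfold Wtr CI
  rw [← intervalIntegral.integral_const_mul]
  congr 1; ext t; simp [mul_pow]; ring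

lemma Ltr_monomial (c : ℝ) (k : ℕ) :
    Ltr (fun u => c * u ^ k) = c * CI k * SI (k + 1) := by
  unfold Ltr SI
  rw [← intervalIntegral.integral_const_mul]
  apply intervalIntegral.integral_congr
  intro φ _
  simp only [Wtr_monomial, pow_succ]; ring

lemma Ltr_eq_R_monomial (c : ℝ) (k : ℕ) :
    Ltr (fun u => c * u ^ k) = π * ∫ u in (-1:ℝ)..1, c * u ^ k := by
  rw [Ltr_monomial, intervalIntegral.integral_const_mul, integral_pow]
  rcases Nat.even_or_odd k with hk | hk
  · obtain ⟨m, rfl⟩ := hk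
    rw [show m + m = 2 * m by ring, CI_even m]
    have h := SI_mul (2 * m)
    have hpos : (2 * (m:ℝ) + 1) ≠ 0 := by positivity
    have hodd : (-1 : ℝ) ^ (2 * m + 1) = -1 := by
      rw [pow_succ, pow_mul]; norm_num
    rw [hodd]
    push_cast at h ⊢
    rw [one_pow]
    have h2 : c * (4 * SI (2*m)) * SI (2*m+1) = 4*c*(SI (2*m) * SI (2*m+1)) := by ring
    rw [h2, h]
    field_simp
    ring
  · rw [CI_odd k hk]
    have : (-1 : ℝ) ^ (k + 1) = 1 := (hk.add_one).neg_one_pow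
    rw [this]
    simp

lemma Wtr_sub {G P : ℝ → ℝ} (hG : Continuous G) (hP : Continuous P) (s : ℝ) :
    Wtr (fun u => G u - P u) s = Wtr G s - Wtr P s := by
  unfold Wtr
  rw [← intervalIntegral.integral_sub]
  · exact (hG.comp (by fun_prop : Continuous fun t : ℝ => s * cos t)).intervalIntegrable _ _
  · exact (hP.comp (by fun_prop : Continuous fun t : ℝ => s * cos t)).intervalIntegrable _ _

lemma Ltr_sub {G P : ℝ → ℝ} (hG : Continuous G) (hP : Continuous P) :
    Ltr (fun u => G u - P u) = Ltr G - Ltr P := by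
  unfold Ltr
  rw [← intervalIntegral.integral_sub]
  · apply intervalIntegral.integral_congr
    intro φ _
    simp only []
    rw [Wtr_sub hG hP]; ring
  · exact (((Wtr_cont hG).comp continuous_sin).mul continuous_sin).intervalIntegrable _ _
  · exact (((Wtr_cont hP).comp continuous_sin).mul continuous_sin).intervalIntegrable _ _

lemma Ltr_add {G P : ℝ → ℝ} (hG : Continuous G) (hP : Continuous P) :
    Ltr (fun u => G u + P u) = Ltr G + Ltr P := by
  unfold Ltr
  rw [← intervalIntegral.integral_add]
  · apply intervalIntegral.integral_congr
    intro φ _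
    have : Wtr (fun u => G u + P u) (sin φ) = Wtr G (sin φ) + Wtr P (sin φ) := by
      unfold Wtr
      rw [← intervalIntegral.integral_add]
      · exact (hG.comp (by fun_prop : Continuous fun t : ℝ => sin φ * cos t)).intervalIntegrable _ _
      · exact (hP.comp (by fun_prop : Continuous fun t : ℝ => sin φ * cos t)).intervalIntegrable _ _
    simp only []
    rw [this]; ring
  · exact (((Wtr_cont hG).comp continuous_sin).mul continuous_sin).intervalIntegrable _ _
  · exact (((Wtr_cont hP).comp continuous_sin).mul continuous_sin).intervalIntegrable _ _

lemma Wtr_bound {G : ℝ → ℝ} {C : ℝ} (hC : ∀ u ∈ Set.Icc (-1:ℝ) 1, |G u| ≤ C)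
    {s : ℝ} (hs : |s| ≤ 1) : |Wtr G s| ≤ C * (2 * π) := by
  have h2π : (0:ℝ) ≤ 2 * π := by positivity
  have := intervalIntegral.norm_integral_le_of_norm_le_const
    (a := 0) (b := 2*π) (C := C) (f := fun t => G (s * cos t)) ?_
  · simpa [Wtr, abs_of_nonneg h2π] using this
  · intro t _
    apply hC
    constructor
    · nlinarith [neg_one_le_cos t, cos_le_one t, abs_nonneg s, neg_abs_le s, le_abs_self s,
        abs_mul s (cos t), abs_cos_le_one t, mul_le_one₀ hs (abs_nonneg (cos t)) (abs_cos_le_one t),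
        neg_abs_le (s * cos t)]
    · nlinarith [abs_mul s (cos t), mul_le_one₀ hs (abs_nonneg (cos t)) (abs_cos_le_one t),
        le_abs_self (s * cos t)]

lemma Ltr_bound {G : ℝ → ℝ} {C : ℝ} (hC : ∀ u ∈ Set.Icc (-1:ℝ) 1, |G u| ≤ C) :
    |Ltr G| ≤ C * (2 * π) * (π / 2) := by
  have hπ : (0:ℝ) ≤ π / 2 := by positivity
  have := intervalIntegral.norm_integral_le_of_norm_le_const
    (a := 0) (b := π/2) (C := C * (2 * π)) (f := fun φ => Wtr G (sin φ) * sin φ) ?_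
  · simpa [Ltr, abs_of_nonneg hπ] using this
  · intro φ _
    have h1 : |Wtr G (sin φ)| ≤ C * (2 * π) := Wtr_bound hC (abs_sin_le_one φ)
    have h2 : |sin φ| ≤ 1 := abs_sin_le_one φ
    calc ‖Wtr G (sin φ) * sin φ‖ = |Wtr G (sin φ)| * |sin φ| := abs_mul _ _
      _ ≤ C * (2 * π) * 1 := by
          apply mul_le_mul h1 h2 (abs_nonneg _) ((abs_nonneg _).trans h1)
      _ = C * (2 * π) := mul_one _

lemma Ltr_poly (P : Polynomial ℝ) :
    Ltr (fun u => P.eval u) = π * ∫ u in (-1:ℝ)..1, P.eval u := by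
  induction P using Polynomial.induction_on' with
  | monomial n a =>
      have h1 : ∀ u : ℝ, (Polynomial.monomial n a).eval u = a * u ^ n := by
        intro u; simp [Polynomial.eval_monomial]
      simp only [h1]
      exact Ltr_eq_R_monomial a n
  | add p q hp hq =>
      have h1 : ∀ u : ℝ, (p + q).eval u = p.eval u + q.eval u := by intro u; simp
      simp only [h1]
      rw [Ltr_add p.continuous q.continuous, hp, hq,
        intervalIntegral.integral_add (p.continuous.intervalIntegrable _ _)
          (q.continuous.intervalIntegrable _ _)]
      ring

set_option synthInstance.maxHeartbeats 1000000 in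
lemma exists_poly_near {G : ℝ → ℝ} (hG : Continuous G) {ε : ℝ} (hε : 0 < ε) :
    ∃ P : Polynomial ℝ, ∀ u ∈ Set.Icc (-1:ℝ) 1, |G u - P.eval u| ≤ ε := by
  set g : C(Set.Icc (-1:ℝ) 1, ℝ) := ⟨fun u => G u, hG.comp continuous_subtype_val⟩ with hg
  have hmem : g ∈ (polynomialFunctions (Set.Icc (-1:ℝ) 1)).topologicalClosure := by
    rw [polynomialFunctions_closure_eq_top]; trivial
  have hmem2 : g ∈ closure ((polynomialFunctions (Set.Icc (-1:ℝ) 1)) : Set C(Set.Icc (-1:ℝ) 1, ℝ)) :=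
    hmem
  rw [Metric.mem_closure_iff] at hmem2
  obtain ⟨q, hq, hdist⟩ := hmem2 ε hε
  rw [polynomialFunctions_coe] at hq
  obtain ⟨P, hP⟩ := hq
  refine ⟨P, fun u hu => ?_⟩
  have h2 := ContinuousMap.dist_apply_le_dist (f := g) (g := q) ⟨u, hu⟩
  have h3 : dist (g ⟨u, hu⟩) (q ⟨u, hu⟩) = |G u - P.eval u| := by
    rw [← hP]
    simp [hg, Real.dist_eq, Polynomial.toContinuousMapOn_apply]
  rw [h3] at h2
  exact h2.trans hdist.le

lemma Ltr_eq {G : ℝ → ℝ} (hG : Continuous G) :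
    Ltr G = π * ∫ u in (-1:ℝ)..1, G u := by
  set D := Ltr G - π * ∫ u in (-1:ℝ)..1, G u with hD
  have main : ∀ ε > 0, |D| ≤ (2*π*(π/2) + 2*π) * ε := by
    intro ε hε
    obtain ⟨P, hP⟩ := exists_poly_near hG hε
    have hPc : Continuous (fun u : ℝ => P.eval u) := P.continuous
    have hb1 : |Ltr (fun u => G u - P.eval u)| ≤ ε * (2*π) * (π/2) :=
      Ltr_bound (fun u hu => hP u hu)
    have hint : |∫ u in (-1:ℝ)..1, (G u - P.eval u)| ≤ ε * 2 := by
      have h := intervalIntegral.norm_integral_le_of_norm_le_const (a := -1) (b := 1) (C := ε)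
        (f := fun u => G u - P.eval u) ?_
      · have : |(1:ℝ) - -1| = 2 := by norm_num
        rw [this] at h
        exact h
      · intro u hu
        have hu2 : u ∈ Set.Icc (-1:ℝ) 1 := by
          have : Set.uIoc (-1:ℝ) 1 = Set.Ioc (-1) 1 := Set.uIoc_of_le (by norm_num)
          rw [this] at hu
          exact Set.Ioc_subset_Icc_self hu
        exact hP u hu2
    have hdecomp : D
        = Ltr (fun u => G u - P.eval u) - π * ∫ u in (-1:ℝ)..1, (G u - P.eval u) := by
      rw [hD, Ltr_sub hG hPc, Ltr_poly P,
        intervalIntegral.integral_sub (hG.intervalIntegrable _ _) (hPc.intervalIntegrable _ _)]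
      ring
    rw [hdecomp]
    set X := Ltr (fun u => G u - P.eval u)
    set Y := ∫ u in (-1:ℝ)..1, (G u - P.eval u)
    have htri : |X - π * Y| ≤ |X| + π * |Y| := by
      have h1 := abs_add_le X (-(π * Y))
      have h2 : X - π * Y = X + -(π * Y) := by ring
      rw [h2]
      refine h1.trans ?_
      rw [abs_neg, abs_mul, abs_of_nonneg pi_pos.le]
    refine htri.trans ?_
    nlinarith [pi_pos, hb1, hint, abs_nonneg Y]
  have hC : (0:ℝ) < 2*π*(π/2) + 2*π := by positivity
  have h0 : |D| ≤ 0 := by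
    refine le_of_forall_pos_le_add fun δ hδ => ?_
    have := main (δ / (2*π*(π/2) + 2*π)) (by positivity)
    rw [mul_div_cancel₀ _ (ne_of_gt hC)] at this
    linarith
  have : D = 0 := abs_nonpos_iff.mp h0
  linarith [this]


lemma oneD {H : ℝ → ℝ} (hH : Continuous H) (heven : ∀ c ∈ Set.Icc (0:ℝ) 1, H (-c) = H c)
    (hM : ∀ s ∈ Set.Icc (0:ℝ) 1, Wtr H s = 0) : H 1 = 0 := by
  have key : ∀ σ ∈ Set.Icc (0:ℝ) 1, (∫ u in (0:ℝ)..σ, H u) = 0 := by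
    rintro σ ⟨hσ0, hσ1⟩
    rcases eq_or_lt_of_le hσ0 with rfl | hσpos
    · simp
    have hGc : Continuous fun u => H (σ * u) := hH.comp (by fun_prop)
    have hL0 : Ltr (fun u => H (σ * u)) = 0 := by
      have hz : ∀ φ ∈ Set.uIcc (0:ℝ) (π/2),
          Wtr (fun u => H (σ * u)) (sin φ) * sin φ = (fun _ => (0:ℝ)) φ := by
        intro φ hφ
        have hφ' : φ ∈ Set.Icc (0:ℝ) (π/2) := by
          rwa [Set.uIcc_of_le (by positivity)] at hφ
        have hs0 : 0 ≤ sin φ := sin_nonneg_of_nonneg_of_le_pi hφ'.1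
          (hφ'.2.trans (by linarith [pi_pos]))
        have hs1 : sin φ ≤ 1 := sin_le_one φ
        have hW : Wtr (fun u => H (σ * u)) (sin φ) = Wtr H (σ * sin φ) := by
          unfold Wtr
          apply intervalIntegral.integral_congr
          intro t _
          simp only []
          ring_nf
        rw [hW, hM (σ * sin φ) ⟨by positivity, by nlinarith⟩, zero_mul]
      unfold Ltr
      rw [intervalIntegral.integral_congr hz, intervalIntegral.integral_zero]
    have h1 : π * ∫ u in (-1:ℝ)..1, H (σ * u) = 0 := by rw [← Ltr_eq hGc, hL0]
    have h2 : (∫ u in (-1:ℝ)..1, H (σ * u)) = 0 :=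
      (mul_eq_zero.mp h1).resolve_left pi_ne_zero
    have h3 : (∫ x in (-σ)..σ, H x) = 0 := by
      have := intervalIntegral.integral_comp_mul_left (a := -1) (b := 1) (f := H)
        (ne_of_gt hσpos)
      rw [this] at h2
      have hσne : σ⁻¹ ≠ 0 := inv_ne_zero (ne_of_gt hσpos)
      rw [smul_eq_mul, mul_eq_zero] at h2
      rcases h2 with h | h
      · exact absurd h hσne
      · simpa using h
    have h4 : (∫ x in (-σ)..(0:ℝ), H x) = ∫ u in (0:ℝ)..σ, H u := by
      have h := intervalIntegral.integral_comp_neg (a := (0:ℝ)) (b := σ) (f := H)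
      rw [neg_zero] at h
      have hcg : ∀ u ∈ Set.uIcc (0:ℝ) σ, H (-u) = H u := by
        intro u hu
        rw [Set.uIcc_of_le hσ0] at hu
        exact heven u ⟨hu.1, hu.2.trans hσ1⟩
      rw [← h, intervalIntegral.integral_congr (g := H) hcg]
    have h5 : (∫ x in (-σ)..(0:ℝ), H x) + (∫ x in (0:ℝ)..σ, H x) = ∫ x in (-σ)..σ, H x :=
      intervalIntegral.integral_add_adjacent_intervals
        (hH.intervalIntegrable _ _) (hH.intervalIntegrable _ _)
    rw [h4] at h5
    rw [h3] at h5
    linarith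
  -- FTC: H = 0 on Ioo 0 1, then closure
  have hzero : ∀ σ ∈ Set.Ioo (0:ℝ) 1, H σ = 0 := by
    intro σ hσ
    have hderiv : HasDerivAt (fun u => ∫ x in (0:ℝ)..u, H x) (H σ) σ :=
      intervalIntegral.integral_hasDerivAt_right (hH.intervalIntegrable _ _)
        (hH.stronglyMeasurableAtFilter _ _) hH.continuousAt
    have hev : (fun u => ∫ x in (0:ℝ)..u, H x) =ᶠ[nhds σ] fun _ => (0:ℝ) := by
      filter_upwards [Ioo_mem_nhds hσ.1 hσ.2] with u hu
      exact key u ⟨hu.1.le, hu.2.le⟩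
    have hderiv0 : HasDerivAt (fun u => ∫ x in (0:ℝ)..u, H x) 0 σ :=
      (hasDerivAt_const σ (0:ℝ)).congr_of_eventuallyEq hev
    exact (hderiv.unique hderiv0)
  have hcl : (1:ℝ) ∈ closure (Set.Ioo (0:ℝ) 1) := by
    rw [closure_Ioo (by norm_num : (0:ℝ) ≠ 1)]
    exact ⟨by norm_num, le_refl 1⟩
  have hclosed : IsClosed {σ : ℝ | H σ = 0} := isClosed_eq hH continuous_const
  have : closure (Set.Ioo (0:ℝ) 1) ⊆ {σ : ℝ | H σ = 0} :=
    hclosed.closure_subset_iff.mpr (fun σ hσ => hzero σ hσ)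
  exact this hcl


lemma swap_II {F : ℝ × ℝ → ℝ} (hF : Continuous F) {a b : ℝ} (hab : a ≤ b) :
    (∫ t in a..b, ∫ τ in a..b, F (τ, t)) = ∫ τ in a..b, ∫ t in a..b, F (τ, t) := by
  have hInt : Integrable (Function.uncurry fun τ t => F (τ, t))
      ((volume.restrict (Set.Ioc a b)).prod (volume.restrict (Set.Ioc a b))) := by
    rw [Measure.prod_restrict]
    have h1 : IntegrableOn F (Set.Icc a b ×ˢ Set.Icc a b) (volume.prod volume) := by
      rw [← Measure.volume_eq_prod]
      exact hF.continuousOn.integrableOn_compact (isCompact_Icc.prod isCompact_Icc)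
    have h2 := h1.mono_set (Set.prod_mono Set.Ioc_subset_Icc_self Set.Ioc_subset_Icc_self)
    rw [← Measure.volume_eq_prod] at *
    exact h2
  have := MeasureTheory.integral_integral_swap hInt
  rw [intervalIntegral.integral_of_le hab]
  simp_rw [intervalIntegral.integral_of_le hab]
  exact this.symm


variable {E : Type*} [NormedAddCommGroup E] [InnerProductSpace ℝ E]

lemma geom (g : E → ℝ) (hg : Continuous g) (hgeven : ∀ y, g (-y) = g y)
    (x e₁ e₂ : E) (hx : ‖x‖ = 1) (he₁ : ‖e₁‖ = 1) (he₂ : ‖e₂‖ = 1)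
    (hxe₁ : ⟪x, e₁⟫ = 0) (hxe₂ : ⟪x, e₂⟫ = 0) (he₁e₂ : ⟪e₁, e₂⟫ = 0)
    (hfunk : ∀ u v : E, ‖u‖ = 1 → ‖v‖ = 1 → ⟪u, v⟫ = 0 →
      (∫ t in (0:ℝ)..(2*π), g (cos t • u + sin t • v)) = 0) :
    g x = 0 := by
  have h2π : (0:ℝ) ≤ 2 * π := by positivity
  -- inner product values
  have hxx : ⟪x, x⟫ = 1 := by rw [real_inner_self_eq_norm_sq, hx]; norm_num
  have h11 : ⟪e₁, e₁⟫ = 1 := by rw [real_inner_self_eq_norm_sq, he₁]; norm_num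
  have h22 : ⟪e₂, e₂⟫ = 1 := by rw [real_inner_self_eq_norm_sq, he₂]; norm_num
  have he₁x : ⟪e₁, x⟫ = 0 := by rw [real_inner_comm]; exact hxe₁
  have he₂x : ⟪e₂, x⟫ = 0 := by rw [real_inner_comm]; exact hxe₂
  have he₂e₁ : ⟪e₂, e₁⟫ = 0 := by rw [real_inner_comm]; exact he₁e₂
  -- the zonal average
  set H : ℝ → ℝ := fun c =>
    ∫ τ in (0:ℝ)..(2*π), g (c • x + Real.sqrt (1 - c^2) • (cos τ • e₁ + sin τ • e₂)) with hHdef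
  have hHcont : Continuous H := by
    apply intervalIntegral.continuous_parametric_intervalIntegral_of_continuous'
      (f := fun c τ => g (c • x + Real.sqrt (1 - c^2) • (cos τ • e₁ + sin τ • e₂)))
      (μ := volume)
    exact hg.comp (by fun_prop)
  -- periodicity of the circle integrand
  have hper : ∀ c s : ℝ, Function.Periodic
      (fun τ => g (c • x + s • (cos τ • e₁ + sin τ • e₂))) (2*π) := by
    intro c s τ
    simp [Real.cos_add_two_pi, Real.sin_add_two_pi]
  -- the shift lemma
  have hshift : ∀ a b c : ℝ, a^2 + b^2 = 1 - c^2 →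
      (∫ τ in (0:ℝ)..(2*π),
        g (c • x + (a * cos τ - b * sin τ) • e₁ + (a * sin τ + b * cos τ) • e₂)) = H c := by
    intro a b c hab
    have h1c : 0 ≤ 1 - c^2 := by nlinarith [sq_nonneg a, sq_nonneg b]
    set s := Real.sqrt (1 - c^2) with hs
    have hs2 : s^2 = a^2 + b^2 := by rw [hs, sq_sqrt h1c, hab]
    have hsnn : 0 ≤ s := Real.sqrt_nonneg _
    have hHc : H c = ∫ τ in (0:ℝ)..(2*π), g (c • x + s • (cos τ • e₁ + sin τ • e₂)) := by
      rw [hs]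
    by_cases h0 : a = 0 ∧ b = 0
    · obtain ⟨rfl, rfl⟩ := h0
      have hs0 : s = 0 := by nlinarith [hs2]
      rw [hHc, hs0]
      apply intervalIntegral.integral_congr
      intro τ _
      norm_num
    · -- polar coordinates for (a, b)
      set z : ℂ := ⟨a, b⟩ with hz
      have hzne : z ≠ 0 := by
        simp only [hz, ne_eq, Complex.ext_iff, Complex.zero_re, Complex.zero_im]
        tauto
      set r := ‖z‖ with hr
      have hrpos : 0 < r := norm_pos_iff.mpr hzne
      have hre : z.re = a := rfl
      have him : z.im = b := rfl
      set α := z.arg with hα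
      have hca : Real.cos α = a / r := by rw [hα, Complex.cos_arg hzne, hre]
      have hsa : Real.sin α = b / r := by rw [hα, Complex.sin_arg, him]
      have hras : r = s := by
        have : r^2 = a^2 + b^2 := by
          rw [hr, Complex.sq_norm, Complex.normSq_apply, hre, him]; ring
        nlinarith [hrpos, hsnn, hs2]
      have ha' : a = s * Real.cos α := by
        rw [hca, ← hras]; field_simp
      have hb' : b = s * Real.sin α := by
        rw [hsa, ← hras]; field_simp
      have hpoint : ∀ τ : ℝ,
          g (c • x + (a * cos τ - b * sin τ) • e₁ + (a * sin τ + b * cos τ) • e₂)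
            = g (c • x + s • (cos (τ + α) • e₁ + sin (τ + α) • e₂)) := by
        intro τ
        congr 1
        rw [Real.cos_add, Real.sin_add, ha', hb']
        module
      rw [intervalIntegral.integral_congr (g := fun τ =>
        (fun τ' => g (c • x + s • (cos τ' • e₁ + sin τ' • e₂))) (τ + α))
        (fun τ _ => hpoint τ)]
      rw [intervalIntegral.integral_comp_add_right
        (fun τ' => g (c • x + s • (cos τ' • e₁ + sin τ' • e₂))) α]
      have h2 := (hper c s).intervalIntegral_add_eq α 0
      rw [zero_add] at h2
      rw [show (0:ℝ) + α = α from zero_add α, show 2*π + α = α + 2*π from add_comm _ _, h2, hHc]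
  -- evenness of H on [0, 1]
  have hHeven : ∀ c ∈ Set.Icc (0:ℝ) 1, H (-c) = H c := by
    rintro c ⟨hc0, hc1⟩
    have h1c : (0:ℝ) ≤ 1 - c^2 := by nlinarith
    have hsq : Real.sqrt (1 - (-c)^2) = Real.sqrt (1 - c^2) := by rw [neg_sq]
    have hpoint : ∀ τ : ℝ,
        g ((-c) • x + Real.sqrt (1 - (-c)^2) • (cos τ • e₁ + sin τ • e₂))
          = g (c • x + ((-Real.sqrt (1 - c^2)) * cos τ - 0 * sin τ) • e₁
              + ((-Real.sqrt (1 - c^2)) * sin τ + 0 * cos τ) • e₂) := by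
      intro τ
      rw [hsq, ← hgeven (c • x + ((-Real.sqrt (1 - c^2)) * cos τ - 0 * sin τ) • e₁
              + ((-Real.sqrt (1 - c^2)) * sin τ + 0 * cos τ) • e₂)]
      congr 1
      module
    calc H (-c) = ∫ τ in (0:ℝ)..(2*π),
        g (c • x + ((-Real.sqrt (1 - c^2)) * cos τ - 0 * sin τ) • e₁
              + ((-Real.sqrt (1 - c^2)) * sin τ + 0 * cos τ) • e₂) := by
          rw [hHdef]
          exact intervalIntegral.integral_congr (fun τ _ => hpoint τ)
      _ = H c := by
          apply hshift
          rw [neg_pow, sq_sqrt h1c]; ring_nf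
  -- orthonormal moving frame
  set U : ℝ → ℝ → E := fun p τ => cos p • (cos τ • e₁ + sin τ • e₂) - sin p • x with hU
  set V : ℝ → E := fun τ => (-sin τ) • e₁ + cos τ • e₂ with hV
  have hUnorm : ∀ p τ, ‖U p τ‖ = 1 := by
    intro p τ
    have h1 : ⟪U p τ, U p τ⟫ = 1 := by
      simp only [hU, inner_sub_left, inner_sub_right, inner_add_left, inner_add_right,
        real_inner_smul_left, real_inner_smul_right, hxx, h11, h22, hxe₁, hxe₂, he₁e₂,
        he₁x, he₂x, he₂e₁]
      nlinarith [sin_sq_add_cos_sq p, sin_sq_add_cos_sq τ]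
    have h2 : ‖U p τ‖^2 = 1 := by rw [← real_inner_self_eq_norm_sq, h1]
    nlinarith [norm_nonneg (U p τ)]
  have hVnorm : ∀ τ, ‖V τ‖ = 1 := by
    intro τ
    have h1 : ⟪V τ, V τ⟫ = 1 := by
      simp only [hV, inner_add_left, inner_add_right, real_inner_smul_left,
        real_inner_smul_right, h11, h22, he₁e₂, he₂e₁]
      nlinarith [sin_sq_add_cos_sq τ]
    have h2 : ‖V τ‖^2 = 1 := by rw [← real_inner_self_eq_norm_sq, h1]
    nlinarith [norm_nonneg (V τ)]
  have hUV : ∀ p τ, ⟪U p τ, V τ⟫ = 0 := by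
    intro p τ
    simp only [hU, hV, inner_sub_left, inner_add_left, inner_add_right,
      real_inner_smul_left, real_inner_smul_right, h11, h22, hxe₁, hxe₂, he₁e₂,
      he₁x, he₂x, he₂e₁]
    ring
  have hfv : ∀ p τ : ℝ, (∫ t in (0:ℝ)..(2*π), g (cos t • U p τ + sin t • V τ)) = 0 :=
    fun p τ => hfunk _ _ (hUnorm p τ) (hVnorm τ) (hUV p τ)
  -- Fubini: the circle integrals averaged over the frame give the zonal transform
  have hmoment : ∀ p : ℝ, Wtr H (-(sin p)) = 0 := by
    intro p
    have hFc : Continuous (fun q : ℝ × ℝ => g (cos q.2 • U p q.1 + sin q.2 • V q.1)) := by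
      apply hg.comp
      simp only [hU, hV]
      fun_prop
    have hswap := swap_II hFc h2π
    have hrhs : (∫ τ in (0:ℝ)..(2*π), ∫ t in (0:ℝ)..(2*π),
        (fun q : ℝ × ℝ => g (cos q.2 • U p q.1 + sin q.2 • V q.1)) (τ, t)) = 0 := by
      have hz : ∀ τ ∈ Set.uIcc (0:ℝ) (2*π),
          (∫ t in (0:ℝ)..(2*π),
            (fun q : ℝ × ℝ => g (cos q.2 • U p q.1 + sin q.2 • V q.1)) (τ, t))
            = (fun _ : ℝ => (0:ℝ)) τ := fun τ _ => hfv p τ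
      rw [intervalIntegral.integral_congr hz, intervalIntegral.integral_zero]
    have hlhs : (∫ t in (0:ℝ)..(2*π), ∫ τ in (0:ℝ)..(2*π),
        (fun q : ℝ × ℝ => g (cos q.2 • U p q.1 + sin q.2 • V q.1)) (τ, t))
          = Wtr H (-(sin p)) := by
      unfold Wtr
      apply intervalIntegral.integral_congr
      intro t _
      dsimp only
      have hab : (cos t * cos p)^2 + (sin t)^2 = 1 - ((-(sin p)) * cos t)^2 := by
        nlinarith [sin_sq_add_cos_sq p, sin_sq_add_cos_sq t]
      have hres := hshift (cos t * cos p) (sin t) ((-(sin p)) * cos t) hab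
      rw [← hres]
      apply intervalIntegral.integral_congr
      intro τ _
      show g (cos t • U p τ + sin t • V τ) = g _
      congr 1
      simp only [hU, hV]
      module
    rw [hswap, hrhs] at hlhs
    exact hlhs.symm
  have hM : ∀ s ∈ Set.Icc (0:ℝ) 1, Wtr H s = 0 := by
    rintro s ⟨hs0, hs1⟩
    have := hmoment (arcsin (-s))
    rwa [Real.sin_arcsin (by linarith) (by linarith), neg_neg] at this
  have hH1 : H 1 = 0 := oneD hHcont hHeven hM
  have hH1' : H 1 = (2*π) * g x := by
    rw [hHdef]
    simp only []
    have : ∀ τ : ℝ, g ((1:ℝ) • x + Real.sqrt (1 - (1:ℝ)^2) • (cos τ • e₁ + sin τ • e₂))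
        = g x := by
      intro τ
      norm_num
    rw [intervalIntegral.integral_congr (g := fun _ => g x) (fun τ _ => this τ)]
    simp [intervalIntegral.integral_const]
  rw [hH1] at hH1'
  have : (2*π) ≠ 0 := by positivity
  field_simp at hH1'
  exact (mul_eq_zero.mp hH1'.symm).resolve_left this


end FunkAux

/-- Funk's theorem: a continuous function on `S^n` (`n ≥ 2`) whose integrals over all
great circles vanish is odd on the sphere. -/
theorem funk_theorem (n : ℕ) (hn : 2 ≤ n)
    (f : EuclideanSpace ℝ (Fin (n + 1)) → ℝ) (hf : Continuous f)
    (hfunk : ∀ u v : EuclideanSpace ℝ (Fin (n + 1)),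
      ‖u‖ = 1 → ‖v‖ = 1 → ⟪u, v⟫ = 0 →
      (∫ t in (0 : ℝ)..(2 * π), f ((Real.cos t) • u + (Real.sin t) • v)) = 0) :
    ∀ x : EuclideanSpace ℝ (Fin (n + 1)), ‖x‖ = 1 → f (-x) = -f x := by
  intro x hx
  set g : EuclideanSpace ℝ (Fin (n + 1)) → ℝ := fun y => f y + f (-y) with hgdef
  have hgc : Continuous g := hf.add (hf.comp continuous_neg)
  have hgeven : ∀ y, g (-y) = g y := by intro y; simp [hgdef, add_comm]
  have hgfunk : ∀ u v : EuclideanSpace ℝ (Fin (n + 1)),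
      ‖u‖ = 1 → ‖v‖ = 1 → ⟪u, v⟫ = 0 →
      (∫ t in (0 : ℝ)..(2 * π), g ((Real.cos t) • u + (Real.sin t) • v)) = 0 := by
    intro u v hu hv huv
    have hcont1 : Continuous fun t : ℝ => f (Real.cos t • u + Real.sin t • v) :=
      hf.comp (by fun_prop)
    have hcont2 : Continuous fun t : ℝ => f (-(Real.cos t • u + Real.sin t • v)) :=
      hf.comp (by fun_prop)
    have hsplit : (∫ t in (0 : ℝ)..(2 * π), g ((Real.cos t) • u + (Real.sin t) • v))
        = (∫ t in (0 : ℝ)..(2 * π), f ((Real.cos t) • u + (Real.sin t) • v))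
          + ∫ t in (0 : ℝ)..(2 * π), f (-((Real.cos t) • u + (Real.sin t) • v)) := by
      rw [← intervalIntegral.integral_add (hcont1.intervalIntegrable _ _)
        (hcont2.intervalIntegrable _ _)]
    have hper : Function.Periodic (fun t => f (Real.cos t • u + Real.sin t • v)) (2 * π) := by
      intro t; simp [Real.cos_add_two_pi, Real.sin_add_two_pi]
    have hsecond : (∫ t in (0 : ℝ)..(2 * π), f (-((Real.cos t) • u + (Real.sin t) • v)))
        = ∫ t in (0 : ℝ)..(2 * π), f ((Real.cos t) • u + (Real.sin t) • v) := by
      have hpoint : ∀ t ∈ Set.uIcc (0:ℝ) (2*π), f (-((Real.cos t) • u + (Real.sin t) • v))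
          = (fun t' => f (Real.cos t' • u + Real.sin t' • v)) (t + π) := by
        intro t _
        simp only [Real.cos_add_pi, Real.sin_add_pi]
        congr 1
        module
      rw [intervalIntegral.integral_congr hpoint,
        intervalIntegral.integral_comp_add_right (fun t' => f (Real.cos t' • u + Real.sin t' • v)) π]
      have h2 := hper.intervalIntegral_add_eq π 0
      rw [zero_add] at h2
      rw [show (0:ℝ) + π = π from zero_add π, show 2*π + π = π + 2*π by ring, h2]
    rw [hsplit, hsecond, hfunk u v hu hv huv]
    simp
  -- construct an orthonormal pair orthogonal to x
  have hxne : x ≠ 0 := by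
    intro h; rw [h, norm_zero] at hx; norm_num at hx
  set K := (ℝ ∙ x)ᗮ with hK
  haveI : Fact (Module.finrank ℝ (EuclideanSpace ℝ (Fin (n+1))) = n + 1) :=
    ⟨finrank_euclideanSpace_fin⟩
  have hfinrank : 2 ≤ Module.finrank ℝ K := by
    rw [hK, Submodule.finrank_orthogonal_span_singleton (n := n) hxne]
    omega
  set B := stdOrthonormalBasis ℝ K with hB
  have h0lt : 0 < Module.finrank ℝ K := by omega
  have h1lt : 1 < Module.finrank ℝ K := by omega
  set i₀ : Fin (Module.finrank ℝ K) := ⟨0, h0lt⟩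
  set i₁ : Fin (Module.finrank ℝ K) := ⟨1, h1lt⟩
  set e₁ : EuclideanSpace ℝ (Fin (n+1)) := ((B i₀ : K) : EuclideanSpace ℝ (Fin (n+1))) with he₁def
  set e₂ : EuclideanSpace ℝ (Fin (n+1)) := ((B i₁ : K) : EuclideanSpace ℝ (Fin (n+1))) with he₂def
  have hBon := B.orthonormal
  have hnorm : ∀ i : Fin (Module.finrank ℝ K), ‖((B i : K) : EuclideanSpace ℝ (Fin (n+1)))‖ = 1 := by
    intro i
    rw [← Submodule.coe_norm]
    exact hBon.1 i
  have hinnerK : ⟪e₁, e₂⟫ = 0 := by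
    rw [he₁def, he₂def, ← Submodule.coe_inner]
    exact hBon.2 (by simp [i₀, i₁, Fin.ext_iff] : i₀ ≠ i₁)
  have hxK : ∀ i : Fin (Module.finrank ℝ K),
      ⟪x, ((B i : K) : EuclideanSpace ℝ (Fin (n+1)))⟫ = 0 := by
    intro i
    have hmem : ((B i : K) : EuclideanSpace ℝ (Fin (n+1))) ∈ (ℝ ∙ x)ᗮ := by
      rw [← hK]; exact (B i).2
    exact (Submodule.mem_orthogonal (ℝ ∙ x) _).mp hmem x (Submodule.mem_span_singleton_self x)
  have hkey := FunkAux.geom g hgc hgeven x e₁ e₂ hx (hnorm i₀) (hnorm i₁)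
    (hxK i₀) (hxK i₁) hinnerK hgfunk
  have : f x + f (-x) = 0 := by
    rw [hgdef] at hkey
    exact hkey
  linarith
end

section
/- Let E be a real inner product space and let R ⊆ E be a crystallographic reduced root system (finite, 0 ∉ R; for all α, β ∈ R the Cartan number 2⟪β, α⟫/⟪α, α⟫ is an integer; for all α, β ∈ R the reflected vector β - (2⟪β, α⟫/⟪α, α⟫) • α lies in R; and the only scalar multiples of any α ∈ R lying in R are α and -α). Assume R is irreducible (R cannot be partitioned into two nonempty subsets R₁, R₂ with ⟪α, β⟫ = 0 for all α ∈ R₁ and β ∈ R₂) and that the linear span of R has dimension at least 2. Let δ ∈ R be a root of maximal length, i.e. ‖β‖ ≤ ‖δ‖ for all β ∈ R. Then there exist β₁, β₂ ∈ R with β₂ ≠ β₁ and β₂ ≠ -β₁ such that for i = 1, 2 the Cartan number 2⟪β_i, δ⟫/⟪δ, δ⟫ equals 1 or -1. -/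
open scoped RealInnerProductSpace

/-- Root-theoretic content of Proposition 5: in an irreducible reduced crystallographic
root system of rank at least two, for a longest root `δ` there are two sign-inequivalent
roots `β₁, β₂` whose Cartan numbers with `δ` equal `±1`. -/
theorem exists_two_roots_cartan_pm_one {E : Type*} [NormedAddCommGroup E]
    [InnerProductSpace ℝ E] (R : Set E)
    (hfin : R.Finite) (hzero : (0 : E) ∉ R)
    (hcartan : ∀ α ∈ R, ∀ β ∈ R, ∃ m : ℤ, 2 * ⟪β, α⟫ / ⟪α, α⟫ = (m : ℝ))
    (hrefl : ∀ α ∈ R, ∀ β ∈ R, β - (2 * ⟪β, α⟫ / ⟪α, α⟫) • α ∈ R)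
    (hreduced : ∀ α ∈ R, ∀ c : ℝ, c • α ∈ R → c = 1 ∨ c = -1)
    (hirr : ¬ ∃ R₁ R₂ : Set E, R₁.Nonempty ∧ R₂.Nonempty ∧ R₁ ∪ R₂ = R ∧
      R₁ ∩ R₂ = ∅ ∧ ∀ α ∈ R₁, ∀ β ∈ R₂, ⟪α, β⟫ = 0)
    (hrank : 2 ≤ Module.finrank ℝ (Submodule.span ℝ R))
    (δ : E) (hδ : δ ∈ R) (hlong : ∀ β ∈ R, ‖β‖ ≤ ‖δ‖) :
    ∃ β₁ ∈ R, ∃ β₂ ∈ R, β₂ ≠ β₁ ∧ β₂ ≠ -β₁ ∧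
      (2 * ⟪β₁, δ⟫ / ⟪δ, δ⟫ = 1 ∨ 2 * ⟪β₁, δ⟫ / ⟪δ, δ⟫ = -1) ∧
      (2 * ⟪β₂, δ⟫ / ⟪δ, δ⟫ = 1 ∨ 2 * ⟪β₂, δ⟫ / ⟪δ, δ⟫ = -1) := by
  have hδ0 : δ ≠ 0 := fun h => hzero (h ▸ hδ)
  have hδδ : ⟪δ, δ⟫ ≠ 0 := fun h => hδ0 (inner_self_eq_zero.mp h)
  have hδnorm : (0 : ℝ) < ‖δ‖ := norm_pos_iff.mpr hδ0
  -- Step 1: find β ∈ R, β ≠ ±δ, with ⟪β, δ⟫ ≠ 0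
  obtain ⟨β, hβ, hβδ, hβnδ, hβinner⟩ :
      ∃ β ∈ R, β ≠ δ ∧ β ≠ -δ ∧ ⟪β, δ⟫ ≠ 0 := by
    by_contra h
    push_neg at h
    apply hirr
    refine ⟨{δ, -δ} ∩ R, R \ {δ, -δ}, ⟨δ, by simp [hδ]⟩, ?_, ?_, ?_, ?_⟩
    · -- R \ {δ, -δ} nonempty since rank ≥ 2
      rw [Set.nonempty_iff_ne_empty]
      intro hemp
      have hsub : R ⊆ {δ, -δ} := by
        intro x hx
        by_contra hx'
        exact (Set.eq_empty_iff_forall_notMem.mp hemp x) ⟨hx, hx'⟩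
      have h1 : Submodule.span ℝ R ≤ Submodule.span ℝ ({δ} : Set E) := by
        rw [Submodule.span_le]
        intro x hx
        rcases hsub hx with h | h
        · rw [h]; exact Submodule.mem_span_singleton_self δ
        · rw [Set.mem_singleton_iff] at h
          rw [h]
          exact Submodule.neg_mem _ (Submodule.mem_span_singleton_self δ)
      have h2 : Module.finrank ℝ (Submodule.span ℝ R) ≤
          Module.finrank ℝ (Submodule.span ℝ ({δ} : Set E)) :=
        Submodule.finrank_mono h1
      rw [finrank_span_singleton hδ0] at h2
      omega
    · ext x
      simp only [Set.mem_inter_iff, Set.mem_insert_iff, Set.mem_singleton_iff,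
        Set.mem_union, Set.mem_diff]
      tauto
    · ext x
      simp only [Set.mem_inter_iff, Set.mem_insert_iff, Set.mem_singleton_iff,
        Set.mem_diff, Set.mem_empty_iff_false, iff_false]
      tauto
    · rintro α ⟨hα1, _⟩ x ⟨hxR, hx⟩
      simp only [Set.mem_insert_iff, Set.mem_singleton_iff] at hα1 hx
      push_neg at hx
      have hx0 := h x hxR hx.1 hx.2
      rcases hα1 with rfl | rfl
      · rw [real_inner_comm]; exact hx0
      · rw [inner_neg_left, real_inner_comm, hx0, neg_zero]
  -- β is not a multiple of δ, so strict Cauchy–Schwarz holds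
  have hβ0 : β ≠ 0 := fun h => hzero (h ▸ hβ)
  have hβnorm : (0 : ℝ) < ‖β‖ := norm_pos_iff.mpr hβ0
  have hnotmul : ∀ c : ℝ, β ≠ c • δ := by
    intro c hc
    rcases hreduced δ hδ c (hc ▸ hβ) with rfl | rfl
    · exact hβδ (by simpa using hc)
    · exact hβnδ (by simpa [neg_smul] using hc)
  have hCS : |⟪β, δ⟫| < ‖β‖ * ‖δ‖ := by
    rw [abs_lt]
    constructor
    · have hlt : ⟪-β, δ⟫ < ‖-β‖ * ‖δ‖ := by
        rw [inner_lt_norm_mul_iff_real]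
        intro h
        apply hnotmul (-(‖δ‖⁻¹ * ‖-β‖))
        have := congrArg (fun v => (‖δ‖)⁻¹ • v) h
        simp only [smul_smul, inv_mul_cancel₀ (ne_of_gt hδnorm), one_smul] at this
        rw [neg_smul, ← this, neg_neg]
      rw [inner_neg_left, norm_neg] at hlt
      linarith
    · rw [inner_lt_norm_mul_iff_real]
      intro h
      apply hnotmul (‖δ‖⁻¹ * ‖β‖)
      have := congrArg (fun v => (‖δ‖)⁻¹ • v) h
      simp only [smul_smul, inv_mul_cancel₀ (ne_of_gt hδnorm), one_smul] at this
      exact this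
  -- the Cartan number of β is ±1
  obtain ⟨m, hm⟩ := hcartan δ hδ β hβ
  have hδδ' : ⟪δ, δ⟫ = ‖δ‖ * ‖δ‖ := real_inner_self_eq_norm_mul_norm δ
  have hm2 : 2 * ⟪β, δ⟫ = m * ⟪δ, δ⟫ := by
    field_simp at hm
    linarith [hm]
  have habs : |(m : ℝ)| < 2 := by
    have h1 : |(m : ℝ)| * (‖δ‖ * ‖δ‖) = 2 * |⟪β, δ⟫| := by
      rw [← abs_of_pos (show (0:ℝ) < ‖δ‖ * ‖δ‖ by positivity), ← abs_mul]
      rw [show (m : ℝ) * (‖δ‖ * ‖δ‖) = 2 * ⟪β, δ⟫ by rw [← hδδ']; linarith]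
      rw [abs_mul, abs_of_pos (by norm_num : (0:ℝ) < 2)]
    have h2 : 2 * |⟪β, δ⟫| < 2 * (‖δ‖ * ‖δ‖) := by
      have := hlong β hβ
      nlinarith
    nlinarith
  have hmne : (m : ℝ) ≠ 0 := by
    intro h
    rw [h] at hm2
    simp at hm2
    exact hβinner hm2
  have hm1 : m = 1 ∨ m = -1 := by
    rw [← Int.cast_abs] at habs
    have h2 : |m| < 2 := by exact_mod_cast habs
    have h3 : m ≠ 0 := fun h => hmne (by exact_mod_cast h)
    have h4 := abs_lt.mp h2
    omega
  have hcart1 : 2 * ⟪β, δ⟫ / ⟪δ, δ⟫ = 1 ∨ 2 * ⟪β, δ⟫ / ⟪δ, δ⟫ = -1 := by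
    rcases hm1 with rfl | rfl
    · left; rw [hm]; norm_num
    · right; rw [hm]; norm_num
  -- second root: reflection of β in δ
  set β₂ := β - (2 * ⟪β, δ⟫ / ⟪δ, δ⟫) • δ with hβ₂def
  have hβ₂ : β₂ ∈ R := hrefl δ hδ β hβ
  have hinner2 : ⟪β₂, δ⟫ = -⟪β, δ⟫ := by
    rw [hβ₂def, inner_sub_left, real_inner_smul_left]
    field_simp
    ring
  have hcart2 : 2 * ⟪β₂, δ⟫ / ⟪δ, δ⟫ = 1 ∨ 2 * ⟪β₂, δ⟫ / ⟪δ, δ⟫ = -1 := by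
    rw [hinner2]
    rcases hcart1 with h | h
    · right; rw [show 2 * -⟪β, δ⟫ / ⟪δ, δ⟫ = -(2 * ⟪β, δ⟫ / ⟪δ, δ⟫) by ring, h]
    · left; rw [show 2 * -⟪β, δ⟫ / ⟪δ, δ⟫ = -(2 * ⟪β, δ⟫ / ⟪δ, δ⟫) by ring, h, neg_neg]
  refine ⟨β, hβ, β₂, hβ₂, ?_, ?_, hcart1, hcart2⟩
  · -- β₂ ≠ β
    intro h
    rw [hβ₂def, sub_eq_self] at h
    have hc0 : 2 * ⟪β, δ⟫ / ⟪δ, δ⟫ ≠ 0 := by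
      rcases hcart1 with h' | h' <;> rw [h'] <;> norm_num
    exact hδ0 ((smul_eq_zero.mp h).resolve_left hc0)
  · -- β₂ ≠ -β
    intro h
    rw [hβ₂def] at h
    have h2β : (2 : ℝ) • β = (2 * ⟪β, δ⟫ / ⟪δ, δ⟫) • δ := by
      have hsum : β - (2 * ⟪β, δ⟫ / ⟪δ, δ⟫) • δ + β = 0 := by rw [h]; abel
      have h2 : (2 : ℝ) • β = β + β := two_smul ℝ β
      rw [h2]
      have := congrArg (fun v => v + (2 * ⟪β, δ⟫ / ⟪δ, δ⟫) • δ) hsum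
      simp only [zero_add] at this
      rw [← this]
      abel
    have := congrArg (fun v => (2 : ℝ)⁻¹ • v) h2β
    simp only [smul_smul] at this
    norm_num at this
    exact hnotmul _ this
end
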